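/- Let α, α' ∈ L²([0,1];𝔤) and let a, a' be their images under the rolling map (solutions of a'(t)a(t)^{-1} = −α(t), a(0)=1). If α_n → α in L², then the corresponding solutions a_n converge uniformly on [0,1] to a; in particular a_n(1) → a(1) in G. -/

import Mathlib

open MeasureTheory Set Filter

lemma my_II_mono {E : Type*} [NormedAddCommGroup E] {f : ℝ → E}
    (h : IntegrableOn f (Icc 0 1) volume) {u v : ℝ} (hu : 0 ≤ u) (huv : u ≤ v) (hv : v ≤ 1) :
    IntervalIntegrable f volume u v := by
  rw [intervalIntegrable_iff, uIoc_of_le huv]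
  exact h.mono_set fun x hx => ⟨hu.trans hx.1.le, hx.2.trans hv⟩

lemma my_int_eq (F : ℝ → ℝ) :
    (∫ t in (0:ℝ)..1, F t) = ∫ t, F t ∂(volume.restrict (Icc (0:ℝ) 1)) := by
  rw [intervalIntegral.integral_of_le zero_le_one,
    ← Measure.restrict_congr_set Ioc_ae_eq_Icc]

lemma my_CS {h w : ℝ → ℝ} (hh : MemLp h 2 (volume.restrict (Icc (0:ℝ) 1)))
    (hw : MemLp w 2 (volume.restrict (Icc (0:ℝ) 1)))
    (hh0 : ∀ t, 0 ≤ h t) (hw0 : ∀ t, 0 ≤ w t) :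
    (∫ t in (0:ℝ)..1, h t * w t) ≤
      Real.sqrt (∫ t in (0:ℝ)..1, h t ^ 2) * Real.sqrt (∫ t in (0:ℝ)..1, w t ^ 2) := by
  have hpq : Real.HolderConjugate 2 2 := ⟨by norm_num, by norm_num, by norm_num⟩
  have h2 : (ENNReal.ofReal (2:ℝ)) = 2 := by norm_num
  have := MeasureTheory.integral_mul_le_Lp_mul_Lq_of_nonneg hpq
    (Filter.Eventually.of_forall hh0) (Filter.Eventually.of_forall hw0)
    (h2 ▸ hh) (h2 ▸ hw)
  rw [my_int_eq, my_int_eq, my_int_eq]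
  calc ∫ t, h t * w t ∂(volume.restrict (Icc (0:ℝ) 1)) ≤ _ := this
  _ = Real.sqrt (∫ t, h t ^ 2 ∂(volume.restrict (Icc (0:ℝ) 1))) *
      Real.sqrt (∫ t, w t ^ 2 ∂(volume.restrict (Icc (0:ℝ) 1))) := by
    rw [Real.sqrt_eq_rpow, Real.sqrt_eq_rpow]
    norm_num

lemma my_mul_bdd {X : Type*} [MeasurableSpace X] {μ : Measure X} {A : Type*} [NormedRing A]
    {f g : X → A} {c : ℝ} (hf : Integrable f μ) (hg : AEStronglyMeasurable g μ)
    (hb : ∀ᵐ x ∂μ, ‖g x‖ ≤ c) : Integrable (fun x => f x * g x) μ := by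
  refine Integrable.mono' (hf.norm.smul c) (hf.aestronglyMeasurable.mul hg) ?_
  filter_upwards [hb] with x hx
  simp only [Pi.smul_apply, smul_eq_mul]
  calc ‖f x * g x‖ ≤ ‖f x‖ * ‖g x‖ := norm_mul_le _ _
    _ ≤ ‖f x‖ * c := mul_le_mul_of_nonneg_left hx (norm_nonneg _)
    _ = c * ‖f x‖ := mul_comm _ _

lemma my_extend {f : ℝ → ℝ} (hf : IntegrableOn f (Icc 0 1) volume)
    (h0 : ∀ s ∈ Icc (0:ℝ) 1, 0 ≤ f s) {u v : ℝ} (hu : 0 ≤ u) (huv : u ≤ v) (hv : v ≤ 1) :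
    (∫ s in u..v, f s) ≤ ∫ s in (0:ℝ)..1, f s := by
  have huv1 : u ≤ 1 := huv.trans hv
  have h0v : (0:ℝ) ≤ v := hu.trans huv
  have I1 : IntervalIntegrable f volume 0 u := my_II_mono hf le_rfl hu huv1
  have I2 : IntervalIntegrable f volume u v := my_II_mono hf hu huv hv
  have I3 : IntervalIntegrable f volume v 1 := my_II_mono hf h0v hv le_rfl
  have e1 := intervalIntegral.integral_add_adjacent_intervals I1 I2
  have e2 := intervalIntegral.integral_add_adjacent_intervals (I1.trans I2) I3
  have n1 : 0 ≤ ∫ s in (0:ℝ)..u, f s :=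
    intervalIntegral.integral_nonneg hu (fun s hs => h0 s ⟨hs.1, hs.2.trans huv1⟩)
  have n3 : 0 ≤ ∫ s in v..1, f s :=
    intervalIntegral.integral_nonneg hv (fun s hs => h0 s ⟨h0v.trans hs.1, hs.2⟩)
  linarith

def myD (b : ℝ) : ℕ → ℝ
  | 0 => 0
  | i+1 => 2 + (2*b+1) * myD b i

lemma myD_nonneg {b : ℝ} (hb : 0 ≤ b) : ∀ i, 0 ≤ myD b i
  | 0 => le_refl 0
  | i+1 => by
    have := myD_nonneg hb i
    simp only [myD]; nlinarith

lemma myD_mono {b : ℝ} (hb : 0 ≤ b) (i : ℕ) : myD b i ≤ myD b (i+1) := by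
  have := myD_nonneg hb i
  simp only [myD]; nlinarith

/-- Continuity of the rolling map (Lie group modeled as the unit group of a Banach algebra):
if `αₙ → α` in `L²([0,1];𝔤)` and `aₙ`, `a` are the solutions of the integral equation
encoding `ȧ a⁻¹ = −α`, `a(0)=1`, then `aₙ → a` uniformly on `[0,1]`; in particular
`aₙ(1) → a(1)`. -/
theorem stmt_16 {A : Type*} [NormedRing A] [NormedAlgebra ℝ A] [CompleteSpace A]
    (α : ℕ → ℝ → A) (αl : ℝ → A)
    (a : ℕ → ℝ → A) (al : ℝ → A)
    (hint : ∀ n, MemLp (α n) 2 (volume.restrict (Icc (0:ℝ) 1)))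
    (hintl : MemLp αl 2 (volume.restrict (Icc (0:ℝ) 1)))
    (ha : ∀ n, ContinuousOn (a n) (Icc 0 1) ∧
      ∀ t ∈ Icc (0:ℝ) 1, a n t = 1 - ∫ s in (0:ℝ)..t, α n s * a n s)
    (hal : ContinuousOn al (Icc 0 1) ∧
      ∀ t ∈ Icc (0:ℝ) 1, al t = 1 - ∫ s in (0:ℝ)..t, αl s * al s)
    (hconv : Tendsto (fun n => ∫ t in (0:ℝ)..1, ‖α n t - αl t‖ ^ 2) atTop (nhds 0)) :
    TendstoUniformlyOn a al atTop (Icc 0 1) ∧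
    Tendsto (fun n => a n 1) atTop (nhds (al 1)) := by
  haveI hfinm : IsFiniteMeasure (volume.restrict (Icc (0:ℝ) 1)) :=
    ⟨by rw [Measure.restrict_apply_univ]; exact isCompact_Icc.measure_lt_top⟩
  obtain ⟨hacont, haeq⟩ := hal
  obtain ⟨K, hK⟩ := isCompact_Icc.exists_bound_of_continuousOn hacont
  have hK0 : (0:ℝ) ≤ K := (norm_nonneg _).trans (hK 0 ⟨le_rfl, zero_le_one⟩)
  have mal : AEStronglyMeasurable al (volume.restrict (Icc (0:ℝ) 1)) :=
    hacont.aestronglyMeasurable measurableSet_Icc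
  have hKae : ∀ᵐ x ∂(volume.restrict (Icc (0:ℝ) 1)), ‖al x‖ ≤ K :=
    (ae_restrict_iff' measurableSet_Icc).mpr (ae_of_all _ hK)
  have hal2 : MemLp al 2 (volume.restrict (Icc (0:ℝ) 1)) := MemLp.of_bound mal K hKae
  have Iαl : IntegrableOn αl (Icc 0 1) volume := hintl.integrable one_le_two
  have Iα : ∀ n, IntegrableOn (α n) (Icc 0 1) volume := fun n => (hint n).integrable one_le_two
  have Iδ : ∀ n, IntegrableOn (fun s => α n s - αl s) (Icc 0 1) volume := fun n => (Iα n).sub Iαl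
  set c : ℕ → ℝ := fun n => ∫ s in (0:ℝ)..1, ‖α n s - αl s‖ * ‖al s‖ with hcdef
  set d : ℕ → ℝ := fun n => ∫ s in (0:ℝ)..1, ‖α n s - αl s‖ with hddef
  have hmemdiff : ∀ n, MemLp (fun s => ‖α n s - αl s‖) 2 (volume.restrict (Icc (0:ℝ) 1)) :=
    fun n => ((hint n).sub hintl).norm
  have c0 : ∀ n, 0 ≤ c n := fun n => intervalIntegral.integral_nonneg zero_le_one
    (fun s _ => mul_nonneg (norm_nonneg _) (norm_nonneg _))
  have d0 : ∀ n, 0 ≤ d n := fun n => intervalIntegral.integral_nonneg zero_le_one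
    (fun s _ => norm_nonneg _)
  have hsq : Tendsto (fun n => Real.sqrt (∫ t in (0:ℝ)..1, ‖α n t - αl t‖ ^ 2)) atTop (nhds 0) := by
    have := (Real.continuous_sqrt.tendsto 0).comp hconv
    simpa [Function.comp_def] using this
  have hcbound : ∀ n, c n ≤ Real.sqrt (∫ t in (0:ℝ)..1, ‖α n t - αl t‖ ^ 2) *
      Real.sqrt (∫ t in (0:ℝ)..1, ‖al t‖ ^ 2) := fun n =>
    my_CS (hmemdiff n) hal2.norm (fun t => norm_nonneg _) (fun t => norm_nonneg _)
  have hctend : Tendsto c atTop (nhds 0) := by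
    have hh : Tendsto (fun n => Real.sqrt (∫ t in (0:ℝ)..1, ‖α n t - αl t‖ ^ 2) *
        Real.sqrt (∫ t in (0:ℝ)..1, ‖al t‖ ^ 2)) atTop (nhds 0) := by
      simpa using hsq.mul_const _
    exact tendsto_of_tendsto_of_tendsto_of_le_of_le tendsto_const_nhds hh c0 hcbound
  have hdbound : ∀ n, d n ≤ Real.sqrt (∫ t in (0:ℝ)..1, ‖α n t - αl t‖ ^ 2) := by
    intro n
    have := my_CS (hmemdiff n) (memLp_const (1:ℝ)) (fun t => norm_nonneg _) (fun t => zero_le_one)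
    simpa using this
  have hdtend : Tendsto d atTop (nhds 0) :=
    tendsto_of_tendsto_of_tendsto_of_le_of_le tendsto_const_nhds hsq d0 hdbound
  set B : ℝ := ∫ s in (0:ℝ)..1, ‖αl s‖ with hBdef
  have hB0 : 0 ≤ B := intervalIntegral.integral_nonneg zero_le_one fun s _ => norm_nonneg _
  set B' : ℝ := B + 4⁻¹ with hB'def
  have hB'0 : (0:ℝ) ≤ B' := by rw [hB'def]; linarith
  have hαbound : ∀ n, d n ≤ 4⁻¹ → ∀ u v : ℝ, 0 ≤ u → u ≤ v → v ≤ 1 →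
      (∫ s in u..v, ‖α n s‖) ≤ (∫ s in u..v, ‖αl s‖) + 4⁻¹ := by
    intro n hdn u v hu huv hv
    have h1 : (∫ s in u..v, ‖α n s‖) ≤ ∫ s in u..v, (‖αl s‖ + ‖α n s - αl s‖) := by
      refine intervalIntegral.integral_mono_on huv (my_II_mono (Iα n).norm hu huv hv)
        ((my_II_mono Iαl.norm hu huv hv).add (my_II_mono (Iδ n).norm hu huv hv)) ?_
      intro s _
      calc ‖α n s‖ = ‖αl s + (α n s - αl s)‖ := by rw [add_sub_cancel]
        _ ≤ ‖αl s‖ + ‖α n s - αl s‖ := norm_add_le _ _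
    have h2 : (∫ s in u..v, (‖αl s‖ + ‖α n s - αl s‖)) =
        (∫ s in u..v, ‖αl s‖) + ∫ s in u..v, ‖α n s - αl s‖ :=
      intervalIntegral.integral_add (my_II_mono Iαl.norm hu huv hv)
        (my_II_mono (Iδ n).norm hu huv hv)
    have h3 : (∫ s in u..v, ‖α n s - αl s‖) ≤ d n :=
      my_extend (Iδ n).norm (fun s _ => norm_nonneg _) hu huv hv
    linarith
  -- the key integral inequality
  have keyineq : ∀ n, ∀ t ∈ Icc (0:ℝ) 1,
      ‖a n t - al t‖ ≤ c n + ∫ s in (0:ℝ)..t, ‖α n s‖ * ‖a n s - al s‖ := by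
    intro n t ht
    obtain ⟨ht0, ht1⟩ := ht
    obtain ⟨Kn, hKn⟩ := isCompact_Icc.exists_bound_of_continuousOn (ha n).1
    have man : AEStronglyMeasurable (a n) (volume.restrict (Icc (0:ℝ) 1)) :=
      (ha n).1.aestronglyMeasurable measurableSet_Icc
    have hKnae : ∀ᵐ x ∂(volume.restrict (Icc (0:ℝ) 1)), ‖a n x‖ ≤ Kn :=
      (ae_restrict_iff' measurableSet_Icc).mpr (ae_of_all _ hKn)
    have Iαa : IntegrableOn (fun s => α n s * a n s) (Icc 0 1) volume :=
      my_mul_bdd (Iα n) man hKnae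
    have Iαlal : IntegrableOn (fun s => αl s * al s) (Icc 0 1) volume :=
      my_mul_bdd Iαl mal hKae
    have I1 : IntervalIntegrable (fun s => α n s * a n s) volume 0 t :=
      my_II_mono Iαa le_rfl ht0 ht1
    have I2 : IntervalIntegrable (fun s => αl s * al s) volume 0 t :=
      my_II_mono Iαlal le_rfl ht0 ht1
    have mφ : AEStronglyMeasurable (fun s => ‖a n s - al s‖) (volume.restrict (Icc (0:ℝ) 1)) :=
      (man.sub mal).norm
    have hφae : ∀ᵐ x ∂(volume.restrict (Icc (0:ℝ) 1)), ‖‖a n x - al x‖‖ ≤ Kn + K := by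
      filter_upwards [hKnae, hKae] with x h1 h2
      rw [norm_norm]; exact (norm_sub_le _ _).trans (add_le_add h1 h2)
    have IA : IntegrableOn (fun s => ‖α n s‖ * ‖a n s - al s‖) (Icc 0 1) volume :=
      my_mul_bdd (Iα n).norm mφ hφae
    have IB : IntegrableOn (fun s => ‖α n s - αl s‖ * ‖al s‖) (Icc 0 1) volume := by
      refine my_mul_bdd (c := K) (Iδ n).norm mal.norm ?_
      filter_upwards [hKae] with x hx; rwa [norm_norm]
    have eq1 : a n t - al t = ∫ s in (0:ℝ)..t, (αl s * al s - α n s * a n s) := by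
      rw [intervalIntegral.integral_sub I2 I1, (ha n).2 t ⟨ht0, ht1⟩, haeq t ⟨ht0, ht1⟩]
      abel
    calc ‖a n t - al t‖ = ‖∫ s in (0:ℝ)..t, (αl s * al s - α n s * a n s)‖ := by rw [eq1]
      _ ≤ ∫ s in (0:ℝ)..t, ‖αl s * al s - α n s * a n s‖ :=
          intervalIntegral.norm_integral_le_integral_norm ht0
      _ ≤ ∫ s in (0:ℝ)..t, (‖α n s - αl s‖ * ‖al s‖ + ‖α n s‖ * ‖a n s - al s‖) := by
          refine intervalIntegral.integral_mono_on ht0 (I2.sub I1).norm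
            ((my_II_mono IB le_rfl ht0 ht1).add (my_II_mono IA le_rfl ht0 ht1)) ?_
          intro s _
          have hrw : αl s * al s - α n s * a n s =
              (αl s - α n s) * al s - α n s * (a n s - al s) := by noncomm_ring
          rw [hrw]
          calc ‖(αl s - α n s) * al s - α n s * (a n s - al s)‖
              ≤ ‖(αl s - α n s) * al s‖ + ‖α n s * (a n s - al s)‖ := norm_sub_le _ _
            _ ≤ ‖αl s - α n s‖ * ‖al s‖ + ‖α n s‖ * ‖a n s - al s‖ :=
                add_le_add (norm_mul_le _ _) (norm_mul_le _ _)
            _ = ‖α n s - αl s‖ * ‖al s‖ + ‖α n s‖ * ‖a n s - al s‖ := by rw [norm_sub_rev]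
      _ = (∫ s in (0:ℝ)..t, ‖α n s - αl s‖ * ‖al s‖) +
            ∫ s in (0:ℝ)..t, ‖α n s‖ * ‖a n s - al s‖ :=
          intervalIntegral.integral_add (my_II_mono IB le_rfl ht0 ht1)
            (my_II_mono IA le_rfl ht0 ht1)
      _ ≤ c n + ∫ s in (0:ℝ)..t, ‖α n s‖ * ‖a n s - al s‖ := by
          have := my_extend IB (fun s _ => mul_nonneg (norm_nonneg _) (norm_nonneg _))
            le_rfl ht0 ht1
          linarith
  -- the partition
  have contG : ContinuousOn (fun t => ∫ s in (0:ℝ)..t, ‖αl s‖) (Icc 0 1) := by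
    have h := intervalIntegral.continuousOn_primitive_interval
      (a := (0:ℝ)) (b := 1) (μ := volume) (f := fun s => ‖αl s‖) ?_
    · simpa [uIcc_of_le (zero_le_one' ℝ)] using h
    · rw [uIcc_of_le (zero_le_one' ℝ)]; exact Iαl.norm
  obtain ⟨δ, hδpos, hδ⟩ := Metric.uniformContinuousOn_iff.mp
    (isCompact_Icc.uniformContinuousOn_of_continuous contG) 4⁻¹ (by norm_num)
  obtain ⟨m0, hm0⟩ := exists_nat_one_div_lt hδpos
  set m : ℕ := m0 + 1 with hmdef
  have hmpos : (0:ℝ) < (m:ℝ) := by positivity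
  have hpiece : ∀ u v : ℝ, 0 ≤ u → u ≤ v → v ≤ 1 → v - u ≤ 1/(m:ℝ) →
      (∫ s in u..v, ‖αl s‖) ≤ 4⁻¹ := by
    intro u v hu huv hv hlen
    have hmem_u : u ∈ Icc (0:ℝ) 1 := ⟨hu, huv.trans hv⟩
    have hmem_v : v ∈ Icc (0:ℝ) 1 := ⟨hu.trans huv, hv⟩
    have hdist : dist v u < δ := by
      rw [Real.dist_eq, abs_of_nonneg (by linarith)]
      calc v - u ≤ 1/(m:ℝ) := hlen
        _ = 1/((m0:ℝ)+1) := by rw [hmdef]; push_cast; ring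
        _ < δ := hm0
    have h2 := hδ v hmem_v u hmem_u hdist
    have heq : (∫ s in u..v, ‖αl s‖) =
        (∫ s in (0:ℝ)..v, ‖αl s‖) - ∫ s in (0:ℝ)..u, ‖αl s‖ :=
      (intervalIntegral.integral_interval_sub_left
        (my_II_mono Iαl.norm le_rfl (hu.trans huv) hv)
        (my_II_mono Iαl.norm le_rfl hu (huv.trans hv))).symm
    rw [heq]
    rw [Real.dist_eq] at h2
    exact (le_abs_self _).trans h2.le
  -- main uniform convergence
  have main : TendstoUniformlyOn a al atTop (Icc 0 1) := by
    rw [Metric.tendstoUniformlyOn_iff]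
    intro ε hε
    have hDm1 : (0:ℝ) < myD B' m + 1 := by linarith [myD_nonneg hB'0 m]
    have hev1 : ∀ᶠ n in atTop, d n ≤ 4⁻¹ :=
      hdtend.eventually (eventually_le_nhds (by norm_num))
    have hev2 : ∀ᶠ n in atTop, c n < ε / (myD B' m + 1) :=
      hctend.eventually (eventually_lt_nhds (div_pos hε hDm1))
    filter_upwards [hev1, hev2] with n hdn hcn
    intro t ht
    -- per-n integrability of the norm product
    obtain ⟨Kn, hKn⟩ := isCompact_Icc.exists_bound_of_continuousOn (ha n).1
    have man : AEStronglyMeasurable (a n) (volume.restrict (Icc (0:ℝ) 1)) :=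
      (ha n).1.aestronglyMeasurable measurableSet_Icc
    have hKnae : ∀ᵐ x ∂(volume.restrict (Icc (0:ℝ) 1)), ‖a n x‖ ≤ Kn :=
      (ae_restrict_iff' measurableSet_Icc).mpr (ae_of_all _ hKn)
    have mφ : AEStronglyMeasurable (fun s => ‖a n s - al s‖) (volume.restrict (Icc (0:ℝ) 1)) :=
      (man.sub mal).norm
    have hφae : ∀ᵐ x ∂(volume.restrict (Icc (0:ℝ) 1)), ‖‖a n x - al x‖‖ ≤ Kn + K := by
      filter_upwards [hKnae, hKae] with x h1 h2
      rw [norm_norm]; exact (norm_sub_le _ _).trans (add_le_add h1 h2)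
    have IA : IntegrableOn (fun s => ‖α n s‖ * ‖a n s - al s‖) (Icc 0 1) volume :=
      my_mul_bdd (Iα n).norm mφ hφae
    -- Gronwall induction along the partition
    have claim : ∀ i, i ≤ m → ∀ τ ∈ Icc (0:ℝ) ((i:ℝ)/(m:ℝ)),
        ‖a n τ - al τ‖ ≤ c n * myD B' i := by
      intro i
      induction i with
      | zero =>
        intro _ τ hτ
        have hτ0 : τ = 0 := le_antisymm (by simpa using hτ.2) hτ.1
        subst hτ0
        have h1 : a n 0 = 1 := by
          rw [(ha n).2 0 ⟨le_rfl, zero_le_one⟩, intervalIntegral.integral_same, sub_zero]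
        have h2 : al 0 = 1 := by
          rw [haeq 0 ⟨le_rfl, zero_le_one⟩, intervalIntegral.integral_same, sub_zero]
        simp [myD, h1, h2]
      | succ i ih =>
        intro hi τ hτ
        have IH := ih (Nat.le_of_succ_le hi)
        have hp0 : (0:ℝ) ≤ (i:ℝ)/(m:ℝ) := by positivity
        have hicast : (i:ℝ) ≤ ((i+1:ℕ):ℝ) := by push_cast; linarith
        have hpT : (i:ℝ)/(m:ℝ) ≤ ((i+1:ℕ):ℝ)/(m:ℝ) := (div_le_div_iff_of_pos_right hmpos).mpr hicast
        have hT1 : ((i+1:ℕ):ℝ)/(m:ℝ) ≤ 1 := by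
          rw [div_le_one hmpos]; exact_mod_cast hi
        have hp1 : (i:ℝ)/(m:ℝ) ≤ 1 := hpT.trans hT1
        have hTp : ((i+1:ℕ):ℝ)/(m:ℝ) - (i:ℝ)/(m:ℝ) = 1/(m:ℝ) := by push_cast; ring
        have hφcont : ContinuousOn (fun s => ‖a n s - al s‖) (Icc 0 (((i+1:ℕ):ℝ)/(m:ℝ))) :=
          (((ha n).1.sub hacont).norm).mono (Icc_subset_Icc le_rfl hT1)
        obtain ⟨z, hzmem, hzmax⟩ := isCompact_Icc.exists_isMaxOn
          ⟨0, ⟨le_rfl, hp0.trans hpT⟩⟩ hφcont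
        have hMz : ∀ τ' ∈ Icc (0:ℝ) (((i+1:ℕ):ℝ)/(m:ℝ)),
            ‖a n τ' - al τ'‖ ≤ ‖a n z - al z‖ := fun τ' h => hzmax h
        have hDnn := myD_nonneg hB'0
        rcases le_or_gt z ((i:ℝ)/(m:ℝ)) with hzp | hzp
        · have hMle : ‖a n z - al z‖ ≤ c n * myD B' i := IH z ⟨hzmem.1, hzp⟩
          calc ‖a n τ - al τ‖ ≤ ‖a n z - al z‖ := hMz τ hτ
            _ ≤ c n * myD B' i := hMle
            _ ≤ c n * myD B' (i+1) := mul_le_mul_of_nonneg_left (myD_mono hB'0 i) (c0 n)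
        · have hz1 : z ∈ Icc (0:ℝ) 1 := ⟨hzmem.1, hzmem.2.trans hT1⟩
          have key := keyineq n z hz1
          have II1 : IntervalIntegrable (fun s => ‖α n s‖ * ‖a n s - al s‖) volume
              0 ((i:ℝ)/(m:ℝ)) := my_II_mono IA le_rfl hp0 hp1
          have II2 : IntervalIntegrable (fun s => ‖α n s‖ * ‖a n s - al s‖) volume
              ((i:ℝ)/(m:ℝ)) z := my_II_mono IA hp0 hzp.le hz1.2
          have hsplit : (∫ s in (0:ℝ)..z, ‖α n s‖ * ‖a n s - al s‖) =
              (∫ s in (0:ℝ)..((i:ℝ)/(m:ℝ)), ‖α n s‖ * ‖a n s - al s‖) +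
              ∫ s in ((i:ℝ)/(m:ℝ))..z, ‖α n s‖ * ‖a n s - al s‖ :=
            (intervalIntegral.integral_add_adjacent_intervals II1 II2).symm
          have hcD : (0:ℝ) ≤ c n * myD B' i := mul_nonneg (c0 n) (hDnn i)
          have hIntB : (∫ s in (0:ℝ)..((i:ℝ)/(m:ℝ)), ‖α n s‖) ≤ B' := by
            have h1 := hαbound n hdn 0 ((i:ℝ)/(m:ℝ)) le_rfl hp0 hp1
            have h2 : (∫ s in (0:ℝ)..((i:ℝ)/(m:ℝ)), ‖αl s‖) ≤ B :=
              my_extend Iαl.norm (fun s _ => norm_nonneg _) le_rfl hp0 hp1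
            rw [hB'def]; linarith
          have hb1 : (∫ s in (0:ℝ)..((i:ℝ)/(m:ℝ)), ‖α n s‖ * ‖a n s - al s‖) ≤
              B' * (c n * myD B' i) := by
            calc (∫ s in (0:ℝ)..((i:ℝ)/(m:ℝ)), ‖α n s‖ * ‖a n s - al s‖)
                ≤ ∫ s in (0:ℝ)..((i:ℝ)/(m:ℝ)), ‖α n s‖ * (c n * myD B' i) :=
                  intervalIntegral.integral_mono_on hp0 II1
                    ((my_II_mono (Iα n).norm le_rfl hp0 hp1).mul_const _)
                    (fun s hs => mul_le_mul_of_nonneg_left (IH s hs) (norm_nonneg _))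
              _ = (∫ s in (0:ℝ)..((i:ℝ)/(m:ℝ)), ‖α n s‖) * (c n * myD B' i) :=
                  intervalIntegral.integral_mul_const _ _
              _ ≤ B' * (c n * myD B' i) := mul_le_mul_of_nonneg_right hIntB hcD
          have hhalf : (∫ s in ((i:ℝ)/(m:ℝ))..z, ‖α n s‖) ≤ 2⁻¹ := by
            have h1 := hαbound n hdn ((i:ℝ)/(m:ℝ)) z hp0 hzp.le hz1.2
            have h2 : (∫ s in ((i:ℝ)/(m:ℝ))..z, ‖αl s‖) ≤ 4⁻¹ := by
              refine hpiece ((i:ℝ)/(m:ℝ)) z hp0 hzp.le hz1.2 ?_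
              have := hzmem.2
              linarith [hTp]
            linarith
          have hb2 : (∫ s in ((i:ℝ)/(m:ℝ))..z, ‖α n s‖ * ‖a n s - al s‖) ≤
              2⁻¹ * ‖a n z - al z‖ := by
            have hM0 : (0:ℝ) ≤ ‖a n z - al z‖ := norm_nonneg _
            calc (∫ s in ((i:ℝ)/(m:ℝ))..z, ‖α n s‖ * ‖a n s - al s‖)
                ≤ ∫ s in ((i:ℝ)/(m:ℝ))..z, ‖α n s‖ * ‖a n z - al z‖ :=
                  intervalIntegral.integral_mono_on hzp.le II2
                    ((my_II_mono (Iα n).norm hp0 hzp.le hz1.2).mul_const _)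
                    (fun s hs => mul_le_mul_of_nonneg_left
                      (hMz s ⟨hp0.trans hs.1, hs.2.trans hzmem.2⟩) (norm_nonneg _))
              _ = (∫ s in ((i:ℝ)/(m:ℝ))..z, ‖α n s‖) * ‖a n z - al z‖ :=
                  intervalIntegral.integral_mul_const _ _
              _ ≤ 2⁻¹ * ‖a n z - al z‖ := mul_le_mul_of_nonneg_right hhalf hM0
          have hMfin : ‖a n z - al z‖ ≤ c n * myD B' (i+1) := by
            have hkey2 : ‖a n z - al z‖ ≤ c n + (B' * (c n * myD B' i) +
                2⁻¹ * ‖a n z - al z‖) := by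
              rw [hsplit] at key; linarith
            show ‖a n z - al z‖ ≤ c n * (2 + (2*B'+1) * myD B' i)
            have e1 : ‖a n z - al z‖ ≤ 2 * c n + 2 * (B' * (c n * myD B' i)) := by
              clear_value B B' c d
              linarith [hkey2]
            have e2 : c n * (2 + (2*B'+1) * myD B' i) =
                2 * c n + 2 * (B' * (c n * myD B' i)) + c n * myD B' i := by ring
            linarith [hcD]
          exact (hMz τ hτ).trans hMfin
    have hfin : ‖a n t - al t‖ ≤ c n * myD B' m := by
      refine claim m le_rfl t ?_
      rwa [div_self (ne_of_gt hmpos)]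
    rw [dist_eq_norm, norm_sub_rev]
    have hmul : c n * (myD B' m + 1) < ε := by
      have h := mul_lt_mul_of_pos_right hcn hDm1
      rwa [div_mul_cancel₀ _ (ne_of_gt hDm1)] at h
    nlinarith [c0 n, myD_nonneg hB'0 m]
  exact ⟨main, main.tendsto_at ⟨zero_le_one, le_rfl⟩⟩
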